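/- Let H = {x ∈ ℝ³ : ⟨x - O, p - O⟩ ≥ 0} be the closed hemisphere of the ball B(O, r) facing a point p with ‖p - O‖ > r. Then every point of the sphere {x : ‖x - O‖ = r} visible from p (i.e., such that the open segment from p to x does not meet the open ball) lies in H. -/
import Mathlib


open RealInnerProductSpace

theorem visible_points_in_facing_hemisphere (O p x : EuclideanSpace ℝ (Fin 3)) (r : ℝ)
    (hr : 0 < r) (hp : r < ‖p - O‖) (hx : ‖x - O‖ = r)
    (hvis : ∀ t : ℝ, t ∈ Set.Ioo (0 : ℝ) 1 → r ≤ ‖(p + t • (x - p)) - O‖) :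
    0 ≤ ⟪x - O, p - O⟫ := by
  by_contra hneg
  push_neg at hneg
  have hxp : x ≠ p := by
    intro h; rw [h] at hx; linarith
  set d := x - p with hd
  have hdnorm : (0 : ℝ) < ‖d‖ := by
    rw [norm_pos_iff, hd, sub_ne_zero]; exact hxp
  set c : ℝ := ⟪x - O, d⟫ with hcdef
  have hsplit : ⟪x - O, p - O⟫ = -c + r ^ 2 := by
    have : ⟪x - O, p - O⟫ = ⟪x - O, -d + (x - O)⟫ := by
      congr 1
      rw [hd]; abel
    rw [this, inner_add_right, inner_neg_right, real_inner_self_eq_norm_sq, hx, hcdef]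
  have hc : 0 < c := by nlinarith
  set ε : ℝ := min (1/2) (c / ‖d‖ ^ 2) with hε
  have hεpos : 0 < ε := lt_min (by norm_num) (by positivity)
  have hεlt : ε < 1 := lt_of_le_of_lt (min_le_left _ _) (by norm_num)
  have ht := hvis (1 - ε) ⟨by linarith, by linarith⟩
  have hrw : p + (1 - ε) • d - O = (x - O) - ε • d := by
    have : p + d = x := by rw [hd]; abel
    rw [sub_smul, one_smul]
    rw [show p + (d - ε • d) - O = (p + d - O) - ε • d by abel, this]
  rw [hrw] at ht
  have hsq : ‖(x - O) - ε • d‖ ^ 2 = r ^ 2 - 2 * ε * c + ε ^ 2 * ‖d‖ ^ 2 := by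
    rw [norm_sub_sq_real, hx, real_inner_smul_right, norm_smul, Real.norm_eq_abs,
      abs_of_pos hεpos]
    rw [← hcdef]; ring
  have h2 : r ^ 2 ≤ ‖(x - O) - ε • d‖ ^ 2 := by
    have := norm_nonneg ((x - O) - ε • d)
    nlinarith
  have h3 : 2 * c ≤ ε * ‖d‖ ^ 2 := by
    rw [hsq] at h2
    nlinarith
  have h4 : ε * ‖d‖ ^ 2 ≤ c := by
    have : ε ≤ c / ‖d‖ ^ 2 := min_le_right _ _
    calc ε * ‖d‖ ^ 2 ≤ (c / ‖d‖ ^ 2) * ‖d‖ ^ 2 := by nlinarith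
    _ = c := by field_simp
  linarith
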